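/- One-dimensional compression does not decrease mutual information: for any Boolean function b: \{0,1\}^n \to \{0,1\} and any coordinate i, if \hat{b} is the Boolean function with \hat{b}^{-1}(0) = C_{\{i\}}(b^{-1}(0)), then I(\hat{b}(X^n); Y^n) \ge I(b(X^n); Y^n). -/

import Mathlib

open Finset

/-- `f2 x = -x log₂ x`, the summand of base-2 Shannon entropy. -/
noncomputable def f2 (x : ℝ) : ℝ := -x * Real.logb 2 x

/-- Binary entropy function `H(α)` (base 2). -/
noncomputable def binEnt (α : ℝ) : ℝ := f2 α + f2 (1 - α)

/-- Joint pmf of `(Xⁿ, Yⁿ)` where `Xⁿ` is i.i.d. Bernoulli(1/2) and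
`Yⁿ = Xⁿ ⊕ Zⁿ` with `Zⁿ` i.i.d. Bernoulli(α) (a memoryless BSC(α)). -/
noncomputable def jointP (n : ℕ) (α : ℝ) (x y : Fin n → Bool) : ℝ :=
  (1/2)^n * ∏ i, (if x i = y i then 1 - α else α)

/-- `Pr{b(Xⁿ) = u, Yⁿ = y}`. -/
noncomputable def pBY (n : ℕ) (α : ℝ) (b : (Fin n → Bool) → Bool) (u : Bool)
    (y : Fin n → Bool) : ℝ :=
  ∑ x : Fin n → Bool, if b x = u then jointP n α x y else 0

/-- `Pr{b(Xⁿ) = u}` for `Xⁿ` uniform on `{0,1}ⁿ`. -/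
noncomputable def pB (n : ℕ) (b : (Fin n → Bool) → Bool) (u : Bool) : ℝ :=
  ∑ x : Fin n → Bool, if b x = u then (1/2)^n else 0

/-- `H(b(Xⁿ))`, the entropy of the Boolean function's output. -/
noncomputable def HB (n : ℕ) (b : (Fin n → Bool) → Bool) : ℝ :=
  ∑ u : Bool, f2 (pB n b u)

/-- `Pr{b(Xⁿ) = 0 ∣ Yⁿ = y}` (note `Pr{Yⁿ = y} = 2⁻ⁿ` since `Yⁿ` is uniform;
`0` is encoded as `false`). -/
noncomputable def condP (n : ℕ) (α : ℝ) (b : (Fin n → Bool) → Bool)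
    (y : Fin n → Bool) : ℝ :=
  (2:ℝ)^n * pBY n α b false y

/-- The conditional entropy `H(b(Xⁿ) ∣ Yⁿ)`. -/
noncomputable def condHB (n : ℕ) (α : ℝ) (b : (Fin n → Bool) → Bool) : ℝ :=
  ∑ y : Fin n → Bool, (1/2)^n * ∑ u : Bool, f2 ((2:ℝ)^n * pBY n α b u y)

/-- The mutual information `I(b(Xⁿ); Yⁿ) = H(b(Xⁿ)) - H(b(Xⁿ) ∣ Yⁿ)`. -/
noncomputable def MI (n : ℕ) (α : ℝ) (b : (Fin n → Bool) → Bool) : ℝ :=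
  HB n b - condHB n α b

/-- Fill the coordinates in `I` of `x` with the pattern `z`. -/
def merge {n : ℕ} (I : Finset (Fin n)) (x : Fin n → Bool)
    (z : {i // i ∈ I} → Bool) : Fin n → Bool :=
  fun i => if h : i ∈ I then z ⟨i, h⟩ else x i

/-- The `I`-section of `B` at `x`: the set of patterns on the coordinates of `I`
which complete the off-`I` part of `x` to an element of `B`. -/
def Isection {n : ℕ} (B : Finset (Fin n → Bool)) (I : Finset (Fin n))
    (x : Fin n → Bool) : Finset ({i // i ∈ I} → Bool) :=
  Finset.univ.filter (fun z => merge I x z ∈ B)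

/-- Numeric value of a pattern on the coordinates of `I`, with smaller indices more
significant: a pattern precedes another in the lexicographic order iff its value is
smaller, so the initial segment `L_{|I|}(M)` is exactly `{z ∣ secVal I z < M}`. -/
def secVal {n : ℕ} (I : Finset (Fin n)) (z : {i // i ∈ I} → Bool) : ℕ :=
  ∑ i : {i // i ∈ I}, if z i then 2 ^ (I.filter (fun j => i.val < j)).card else 0

/-- The `I`-compression `C_I(B)`: each `I`-section of `B` is replaced by the initial
segment of the same cardinality in the lexicographic order on patterns. -/
def compress {n : ℕ} (I : Finset (Fin n)) (B : Finset (Fin n → Bool)) :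
    Finset (Fin n → Bool) :=
  Finset.univ.filter (fun y => secVal I (fun i => y i.val) < (Isection B I y).card)

/-! ### Auxiliary machinery -/

/-- Channel transition weight. -/
noncomputable def wt (α : ℝ) (c d : Bool) : ℝ := if c = d then 1 - α else α

section Aux

variable {n : ℕ} (i : Fin n)

/-- Glue a value at coordinate `i` with values elsewhere. -/
def glue (c : Bool) (x' : {j // j ≠ i} → Bool) : Fin n → Bool :=
  fun j => if h : j = i then c else x' ⟨j, h⟩

lemma glue_at (c : Bool) (x' : {j // j ≠ i} → Bool) : glue i c x' i = c := dif_pos rfl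

lemma glue_ne (c : Bool) (x' : {j // j ≠ i} → Bool) {j : Fin n} (h : j ≠ i) :
    glue i c x' j = x' ⟨j, h⟩ := dif_neg h

lemma sum_split {M : Type*} [AddCommMonoid M] (F : (Fin n → Bool) → M) :
    ∑ x, F x = ∑ x' : {j // j ≠ i} → Bool, (F (glue i false x') + F (glue i true x')) := by
  have h1 : ∀ (c : Bool) (x' : {j // j ≠ i} → Bool),
      (Equiv.funSplitAt i Bool).symm (c, x') = glue i c x' := by
    intro c x'; funext j
    by_cases hj : j = i
    · subst hj; rfl
    · simp [glue, Equiv.funSplitAt, hj]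
  rw [← Equiv.sum_comp (Equiv.funSplitAt i Bool).symm F, Fintype.sum_prod_type,
    Fintype.sum_bool, ← Finset.sum_add_distrib]
  exact Finset.sum_congr rfl fun x' _ => by rw [h1, h1, add_comm]

instance : Unique {j // j ∈ ({i} : Finset (Fin n))} :=
  ⟨⟨⟨i, Finset.mem_singleton_self i⟩⟩, fun j => Subtype.ext (Finset.mem_singleton.mp j.2)⟩

lemma secVal_singleton (z : {j // j ∈ ({i} : Finset (Fin n))} → Bool) :
    secVal {i} z = if z ⟨i, Finset.mem_singleton_self i⟩ then 1 else 0 := by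
  unfold secVal
  rw [Fintype.sum_unique]
  have : (default : {j // j ∈ ({i} : Finset (Fin n))}) = ⟨i, Finset.mem_singleton_self i⟩ := rfl
  rw [this]
  simp [Finset.filter_singleton]

lemma Isection_card (B : Finset (Fin n → Bool)) (c : Bool) (x' : {j // j ≠ i} → Bool) :
    (Isection B {i} (glue i c x')).card
      = (if glue i false x' ∈ B then 1 else 0) + (if glue i true x' ∈ B then 1 else 0) := by
  have hm : ∀ z : {j // j ∈ ({i} : Finset (Fin n))} → Bool,
      merge {i} (glue i c x') z = glue i (z ⟨i, Finset.mem_singleton_self i⟩) x' := by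
    intro z; funext j
    by_cases hj : j = i
    · subst hj
      rw [show merge {j} (glue j c x') z j = z ⟨j, Finset.mem_singleton_self j⟩ from
        dif_pos (Finset.mem_singleton_self j), glue_at]
    · have hj' : j ∉ ({i} : Finset (Fin n)) := by simp [hj]
      rw [show merge {i} (glue i c x') z j = glue i c x' j from dif_neg hj',
        glue_ne _ _ _ hj, glue_ne _ _ _ hj]
  unfold Isection
  rw [Finset.card_filter]
  rw [← Equiv.sum_comp (Equiv.funUnique {j // j ∈ ({i} : Finset (Fin n))} Bool).symm
    (fun z => if merge {i} (glue i c x') z ∈ B then 1 else 0), Fintype.sum_bool]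
  have e : ∀ d : Bool, (Equiv.funUnique {j // j ∈ ({i} : Finset (Fin n))} Bool).symm d
      = fun _ => d := fun d => rfl
  rw [e, e, hm, hm, add_comm]

lemma mem_compress_glue (B : Finset (Fin n → Bool)) (c : Bool) (x' : {j // j ≠ i} → Bool) :
    glue i c x' ∈ compress {i} B ↔
      (if c then (glue i false x' ∈ B ∧ glue i true x' ∈ B)
       else (glue i false x' ∈ B ∨ glue i true x' ∈ B)) := by
  unfold compress
  rw [Finset.mem_filter]
  rw [secVal_singleton, Isection_card]
  have : glue i c x' (⟨i, Finset.mem_singleton_self i⟩ :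
    {j // j ∈ ({i} : Finset (Fin n))}).val = c := glue_at i c x'
  rw [this]
  cases c <;> by_cases h0 : glue i false x' ∈ B <;> by_cases h1 : glue i true x' ∈ B <;>
    simp [h0, h1]

end Aux

section Prob

variable {n : ℕ} {α : ℝ}

lemma two_halves : (2:ℝ)^n * (1/2)^n = 1 := by
  rw [← mul_pow]; norm_num

lemma condP_eq (b : (Fin n → Bool) → Bool) (y : Fin n → Bool) :
    condP n α b y = ∑ x : Fin n → Bool,
      if b x = false then ∏ j, wt α (x j) (y j) else 0 := by
  unfold condP pBY jointP wt
  rw [Finset.mul_sum]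
  refine Finset.sum_congr rfl fun x _ => ?_
  split_ifs with hb
  · rw [← mul_assoc, two_halves, one_mul]
  · rw [mul_zero]

lemma sum_prod_wt (y : Fin n → Bool) :
    ∑ x : Fin n → Bool, ∏ j, wt α (x j) (y j) = 1 := by
  rw [← Fintype.prod_sum (f := fun j (c : Bool) => wt α c (y j))]
  rw [Finset.prod_congr rfl (fun j _ => show ∑ c : Bool, wt α c (y j) = 1 by
    cases y j <;> simp [wt, Fintype.sum_bool])]
  exact Finset.prod_const_one

lemma wt_nonneg (hα : α ∈ Set.Icc (0:ℝ) (1/2)) (c d : Bool) : 0 ≤ wt α c d := by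
  obtain ⟨h0, h1⟩ := hα; unfold wt; split_ifs <;> linarith

lemma prod_wt_nonneg (hα : α ∈ Set.Icc (0:ℝ) (1/2)) (x y : Fin n → Bool) :
    0 ≤ ∏ j, wt α (x j) (y j) :=
  Finset.prod_nonneg fun _ _ => wt_nonneg hα _ _

lemma condP_nonneg (hα : α ∈ Set.Icc (0:ℝ) (1/2)) (b : (Fin n → Bool) → Bool)
    (y : Fin n → Bool) : 0 ≤ condP n α b y := by
  rw [condP_eq]
  refine Finset.sum_nonneg fun x _ => ?_
  split_ifs
  · exact prod_wt_nonneg hα x y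
  · exact le_refl 0

lemma condP_le_one (hα : α ∈ Set.Icc (0:ℝ) (1/2)) (b : (Fin n → Bool) → Bool)
    (y : Fin n → Bool) : condP n α b y ≤ 1 := by
  rw [condP_eq, ← sum_prod_wt (α := α) y]
  refine Finset.sum_le_sum fun x _ => ?_
  split_ifs
  · exact le_refl _
  · exact prod_wt_nonneg hα x y

lemma pBY_true (b : (Fin n → Bool) → Bool) (y : Fin n → Bool) :
    (2:ℝ)^n * pBY n α b true y = 1 - condP n α b y := by
  have hsum : pBY n α b false y + pBY n α b true y = (1/2)^n := by
    unfold pBY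
    rw [← Finset.sum_add_distrib]
    rw [Finset.sum_congr rfl (fun x _ => show _ = jointP n α x y by
      cases hbx : b x <;> simp [hbx])]
    unfold jointP
    rw [← Finset.mul_sum,
      show (∑ x : Fin n → Bool, ∏ j, (if x j = y j then 1 - α else α)) = 1 from
        sum_prod_wt y, mul_one]
  rw [show pBY n α b true y = (1/2)^n - pBY n α b false y from by linarith,
    mul_sub, two_halves]
  rfl

lemma entropy_term (b : (Fin n → Bool) → Bool) (y : Fin n → Bool) :
    ∑ u : Bool, f2 ((2:ℝ)^n * pBY n α b u y) = binEnt (condP n α b y) := by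
  rw [Fintype.sum_bool, pBY_true, binEnt, add_comm]
  rfl

lemma condHB_eq (b : (Fin n → Bool) → Bool) :
    condHB n α b = ∑ y : Fin n → Bool, (1/2)^n * binEnt (condP n α b y) := by
  unfold condHB
  exact Finset.sum_congr rfl fun y _ => by rw [entropy_term]

lemma prod_wt_glue (i : Fin n) (c d : Bool) (x' y' : {j // j ≠ i} → Bool) :
    ∏ j, wt α (glue i c x' j) (glue i d y' j)
      = wt α c d * ∏ j : {j // j ≠ i}, wt α (x' j) (y' j) := by
  rw [← Finset.mul_prod_erase Finset.univ _ (Finset.mem_univ i)]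
  congr 1
  · rw [glue_at, glue_at]
  · rw [Finset.prod_subtype (Finset.univ.erase i) (p := fun j => j ≠ i)
      (fun j => by simp) (fun j => wt α (glue i c x' j) (glue i d y' j))]
    exact Finset.prod_congr rfl fun j _ => by rw [glue_ne _ _ _ j.2, glue_ne _ _ _ j.2]

lemma P_glue (i : Fin n) (b : (Fin n → Bool) → Bool) (d : Bool)
    (y' : {j // j ≠ i} → Bool) :
    condP n α b (glue i d y') =
      ∑ x' : {j // j ≠ i} → Bool,
        ((if b (glue i false x') = false then wt α false d else 0)
          + (if b (glue i true x') = false then wt α true d else 0))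
          * ∏ j : {j // j ≠ i}, wt α (x' j) (y' j) := by
  rw [condP_eq, sum_split i]
  refine Finset.sum_congr rfl fun x' _ => ?_
  rw [prod_wt_glue, prod_wt_glue]
  split_ifs <;> ring

end Prob

/-! ### Concavity of binary entropy -/

lemma binEnt_concave : ConcaveOn ℝ (Set.Icc (0:ℝ) 1) binEnt := by
  have h1 : ConcaveOn ℝ (Set.Icc (0:ℝ) 1) Real.negMulLog :=
    Real.concaveOn_negMulLog.subset (fun x hx => hx.1) (convex_Icc 0 1)
  have h2 : ConcaveOn ℝ (Set.Icc (0:ℝ) 1)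
      (Real.negMulLog ∘ (AffineMap.lineMap (1:ℝ) (0:ℝ))) := by
    refine ConcaveOn.subset
      (Real.concaveOn_negMulLog.comp_affineMap (AffineMap.lineMap (1:ℝ) (0:ℝ)))
      ?_ (convex_Icc 0 1)
    intro x hx
    simp only [Set.mem_preimage, AffineMap.lineMap_apply, Set.mem_Ici,
      smul_eq_mul, vsub_eq_sub, vadd_eq_add]
    simp only [Set.mem_Icc] at hx
    nlinarith [hx.1, hx.2]
  have h3 := (h1.add h2).smul (c := (Real.log 2)⁻¹)
    (inv_nonneg.mpr (Real.log_nonneg (by norm_num)))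
  have heq : binEnt = (Real.log 2)⁻¹ •
      (Real.negMulLog + Real.negMulLog ∘ (AffineMap.lineMap (1:ℝ) (0:ℝ))) := by
    funext x
    simp only [binEnt, f2, Pi.smul_apply, Pi.add_apply, Function.comp_apply,
      AffineMap.lineMap_apply, Real.negMulLog, Real.logb, smul_eq_mul,
      vsub_eq_sub, vadd_eq_add]
    ring
  rw [heq]
  exact h3

lemma binEnt_spread {p0 p1 q0 q1 : ℝ} (hq1 : 0 ≤ q1) (hq0 : q0 ≤ 1)
    (h1 : q1 ≤ p1) (h2 : p1 ≤ p0) (h3 : p0 ≤ q0) (hs : p0 + p1 = q0 + q1) :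
    binEnt q0 + binEnt q1 ≤ binEnt p0 + binEnt p1 := by
  have hqq : q1 ≤ q0 := by linarith
  rcases eq_or_lt_of_le hqq with heq | hlt
  · have e0 : p0 = q0 := by linarith
    have e1 : p1 = q1 := by linarith
    rw [e0, e1]
  · set lam := (p0 - q1) / (q0 - q1) with hlam
    have hd : q0 - q1 > 0 := by linarith
    have hl0 : 0 ≤ lam := div_nonneg (by linarith) (by linarith)
    have hl1 : lam ≤ 1 := (div_le_one hd).2 (by linarith)
    have hmem0 : q0 ∈ Set.Icc (0:ℝ) 1 := ⟨by linarith, hq0⟩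
    have hmem1 : q1 ∈ Set.Icc (0:ℝ) 1 := ⟨hq1, by linarith⟩
    have hx : lam * q0 + (1 - lam) * q1 = p0 := by
      have hm : lam * (q0 - q1) = p0 - q1 := by rw [hlam]; exact div_mul_cancel₀ _ hd.ne'
      linear_combination hm
    have hy : (1 - lam) * q0 + lam * q1 = p1 := by
      have hm : lam * (q0 - q1) = p0 - q1 := by rw [hlam]; exact div_mul_cancel₀ _ hd.ne'
      linear_combination -hs - hm
    have hcc := binEnt_concave.2
    have A := hcc hmem0 hmem1 (a := lam) (b := 1 - lam) hl0 (by linarith) (by ring)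
    have B := hcc hmem0 hmem1 (a := 1 - lam) (b := lam) (by linarith) hl0 (by ring)
    simp only [smul_eq_mul] at A B
    rw [hx] at A
    rw [show (1 - lam) * q0 + lam * q1 = p1 from hy] at B
    nlinarith [A, B]

/-- One-dimensional compression does not decrease mutual information: if
`b̂⁻¹(0) = C_{i}(b⁻¹(0))` then `I(b̂(Xⁿ); Yⁿ) ≥ I(b(Xⁿ); Yⁿ)`. -/
theorem one_dim_compression (n : ℕ) (α : ℝ) (hα : α ∈ Set.Icc (0:ℝ) (1/2))
    (b bhat : (Fin n → Bool) → Bool) (i : Fin n)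
    (h : Finset.univ.filter (fun x => bhat x = false) =
      compress {i} (Finset.univ.filter (fun x => b x = false))) :
    MI n α bhat ≥ MI n α b := by
  obtain ⟨hα0, hα2⟩ := hα
  have hbh : ∀ x : Fin n → Bool, bhat x = false ↔
      x ∈ compress {i} (Finset.univ.filter (fun x => b x = false)) := by
    intro x; rw [← h]; simp
  have hF : ∀ x' : {j // j ≠ i} → Bool,
      (bhat (glue i false x') = false ↔
        (b (glue i false x') = false ∨ b (glue i true x') = false)) := by
    intro x'
    rw [hbh, mem_compress_glue]
    simp
  have hT : ∀ x' : {j // j ≠ i} → Bool,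
      (bhat (glue i true x') = false ↔
        (b (glue i false x') = false ∧ b (glue i true x') = false)) := by
    intro x'
    rw [hbh, mem_compress_glue]
    simp
  -- H(b(Xⁿ)) is unchanged
  have hpB : ∀ u, pB n bhat u = pB n b u := by
    intro u
    unfold pB
    rw [sum_split i, sum_split i]
    refine Finset.sum_congr rfl fun x' _ => ?_
    have h1 := hF x'; have h2 := hT x'
    rcases hbf : b (glue i false x') with _ | _ <;>
      rcases hbt : b (glue i true x') with _ | _ <;>
      rw [hbf, hbt] at h1 h2 <;> simp at h1 h2 <;>
      cases u <;> simp [h1, h2, hbf, hbt]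
  have hHB : HB n bhat = HB n b := by
    unfold HB; exact Finset.sum_congr rfl fun u _ => by rw [hpB]
  -- conditional entropy does not increase
  have hcond : condHB n α bhat ≤ condHB n α b := by
    rw [condHB_eq, condHB_eq]
    rw [sum_split i (fun y => (1/2:ℝ)^n * binEnt (condP n α bhat y)),
        sum_split i (fun y => (1/2:ℝ)^n * binEnt (condP n α b y))]
    refine Finset.sum_le_sum fun y' _ => ?_
    have hKn : ∀ x' : {j // j ≠ i} → Bool,
        0 ≤ ∏ j : {j // j ≠ i}, wt α (x' j) (y' j) :=
      fun x' => Finset.prod_nonneg fun _ _ => wt_nonneg ⟨hα0, hα2⟩ _ _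
    have hsum : condP n α bhat (glue i false y') + condP n α bhat (glue i true y')
        = condP n α b (glue i false y') + condP n α b (glue i true y') := by
      rw [P_glue i bhat false y', P_glue i bhat true y',
        P_glue i b false y', P_glue i b true y',
        ← Finset.sum_add_distrib, ← Finset.sum_add_distrib]
      refine Finset.sum_congr rfl fun x' _ => ?_
      have h1 := hF x'; have h2 := hT x'
      rcases hbf : b (glue i false x') with _ | _ <;>
        rcases hbt : b (glue i true x') with _ | _ <;>
        rw [hbf, hbt] at h1 h2 <;> simp at h1 h2 <;>
        simp [h1, h2, hbf, hbt, wt] <;> ring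
    have hdiff : |condP n α b (glue i false y') - condP n α b (glue i true y')|
        ≤ condP n α bhat (glue i false y') - condP n α bhat (glue i true y') := by
      rw [P_glue i bhat false y', P_glue i bhat true y',
        P_glue i b false y', P_glue i b true y',
        ← Finset.sum_sub_distrib, ← Finset.sum_sub_distrib]
      refine le_trans (Finset.abs_sum_le_sum_abs _ _) (Finset.sum_le_sum fun x' _ => ?_)
      have h1 := hF x'; have h2 := hT x'
      have hK := hKn x'
      simp only [wt] at hK
      rcases hbf : b (glue i false x') with _ | _ <;>
        rcases hbt : b (glue i true x') with _ | _ <;>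
        rw [hbf, hbt] at h1 h2 <;> simp at h1 h2 <;>
        simp [h1, h2, hbf, hbt, wt] <;>
        rw [abs_le] <;>
        constructor <;>
        nlinarith [mul_nonneg (by linarith : (0:ℝ) ≤ 1 - 2*α) hK, hK]
    -- conclude for this pair
    have hq1n : 0 ≤ condP n α bhat (glue i true y') :=
      condP_nonneg ⟨hα0, hα2⟩ bhat _
    have hq0o : condP n α bhat (glue i false y') ≤ 1 :=
      condP_le_one ⟨hα0, hα2⟩ bhat _
    rw [← mul_add, ← mul_add]
    refine mul_le_mul_of_nonneg_left ?_ (by positivity)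
    rcases le_total (condP n α b (glue i true y')) (condP n α b (glue i false y'))
      with hcmp | hcmp
    · have habs : |condP n α b (glue i false y') - condP n α b (glue i true y')|
          = condP n α b (glue i false y') - condP n α b (glue i true y') :=
        abs_of_nonneg (by linarith)
      rw [habs] at hdiff
      exact binEnt_spread hq1n hq0o (by linarith) hcmp (by linarith) (by linarith)
    · have habs : |condP n α b (glue i false y') - condP n α b (glue i true y')|
          = condP n α b (glue i true y') - condP n α b (glue i false y') := by
        rw [abs_sub_comm]
        exact abs_of_nonneg (by linarith)
      rw [habs] at hdiff
      have := binEnt_spread hq1n hq0o (by linarith) hcmp (by linarith) (by linarith)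
      linarith
  unfold MI
  rw [hHB]
  linarith
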